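/- Conditional Azuma–Hoeffding inequality: Let $(Y_i)_{i=0}^k$ be $\mathbb{R}^d$-valued martingale differences with respect to a filtration $(\mathcal{F}_i)_{i=0}^k$ with $Y_0 = 0$, and suppose there are deterministic constants $\delta_i$ with $|Y_i| \le \delta_i$ almost surely for each $i$. Set $S_k = \sum_{i=1}^k Y_i$ and $\Lambda = \delta_1^2 + \cdots + \delta_k^2$. Then almost surely $\mathbb{E}[\exp(|S_k|^2 / (4 d \Lambda)) \mid \mathcal{F}_0] \le 3$. -/

import Mathlib

open MeasureTheory Real Set
open scoped ENNReal

lemma abs_coord_le_norm {d : ℕ} (x : EuclideanSpace ℝ (Fin d)) (j : Fin d) :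
    |x j| ≤ ‖x‖ := by
  rw [EuclideanSpace.norm_eq]
  have h : ‖x j‖ ^ 2 ≤ ∑ i, ‖x i‖ ^ 2 :=
    Finset.single_le_sum (f := fun i => ‖x i‖ ^ 2) (fun i _ => sq_nonneg _) (Finset.mem_univ j)
  calc |x j| = √(‖x j‖ ^ 2) := by rw [Real.sqrt_sq_eq_abs, Real.norm_eq_abs, abs_abs]
  _ ≤ _ := Real.sqrt_le_sqrt h

lemma cond_hoeffding {Ω : Type*} {m m0 : MeasurableSpace Ω} {μ : Measure Ω}
    [IsFiniteMeasure μ] (hm : m ≤ m0) {X : Ω → ℝ} {δ c : ℝ}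
    (hδ : 0 ≤ δ) (hint : Integrable X μ) (hcond : μ[X|m] =ᵐ[μ] 0)
    (hbdd : ∀ᵐ ω ∂μ, |X ω| ≤ δ) :
    μ[fun ω => exp (c * X ω)|m] ≤ᵐ[μ] fun _ => exp (c ^ 2 * δ ^ 2 / 2) := by
  rcases eq_or_lt_of_le hδ with hδ0 | hδ0
  · -- δ = 0 : X = 0 a.e.
    have hX0 : X =ᵐ[μ] 0 := by
      filter_upwards [hbdd] with ω h
      rw [← hδ0] at h
      simpa using abs_nonpos_iff.mp h
    have h1 : (fun ω => exp (c * X ω)) =ᵐ[μ] fun _ => (1 : ℝ) := by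
      filter_upwards [hX0] with ω h
      simp [h]
    calc μ[fun ω => exp (c * X ω)|m] =ᵐ[μ] μ[fun _ => (1:ℝ)|m] := condExp_congr_ae h1
    _ = fun _ => (1:ℝ) := condExp_const hm 1
    _ ≤ᵐ[μ] fun _ => exp (c ^ 2 * δ ^ 2 / 2) := by
        refine Filter.Eventually.of_forall fun ω => ?_
        exact Real.one_le_exp (by positivity)
  · -- 0 < δ
    set B : ℝ := sinh (c * δ) / δ with hB
    have hpt : ∀ᵐ ω ∂μ, exp (c * X ω) ≤ cosh (c * δ) + B * X ω := by
      filter_upwards [hbdd] with ω h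
      obtain ⟨hl, hr⟩ := abs_le.mp h
      have ha : (0:ℝ) ≤ (δ - X ω) / (2 * δ) := by
        apply div_nonneg (by linarith) (by linarith)
      have hb : (0:ℝ) ≤ (δ + X ω) / (2 * δ) := by
        apply div_nonneg (by linarith) (by linarith)
      have hab : (δ - X ω) / (2 * δ) + (δ + X ω) / (2 * δ) = 1 := by
        field_simp
        ring
      have hkey := convexOn_exp.2 (Set.mem_univ (-(c * δ))) (Set.mem_univ (c * δ))
        ha hb hab
      have he1 : ((δ - X ω) / (2 * δ)) • (-(c * δ)) + ((δ + X ω) / (2 * δ)) • (c * δ)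
          = c * X ω := by
        simp only [smul_eq_mul]
        rw [div_mul_eq_mul_div, div_mul_eq_mul_div, ← add_div, eq_comm,
          eq_div_iff (by positivity : (2:ℝ) * δ ≠ 0)]
        ring
      rw [he1] at hkey
      refine hkey.trans (le_of_eq ?_)
      simp only [smul_eq_mul, hB]
      rw [Real.cosh_eq, Real.sinh_eq]
      field_simp
      ring
    have hexp_int : Integrable (fun ω => exp (c * X ω)) μ := by
      refine Integrable.mono' (integrable_const (exp (|c| * δ)))
        (Real.continuous_exp.comp_aestronglyMeasurable (hint.1.const_mul c)) ?_
      filter_upwards [hbdd] with ω h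
      rw [Real.norm_eq_abs, Real.abs_exp]
      apply Real.exp_le_exp.mpr
      calc c * X ω ≤ |c * X ω| := le_abs_self _
      _ = |c| * |X ω| := abs_mul _ _
      _ ≤ |c| * δ := mul_le_mul_of_nonneg_left h (abs_nonneg c)
    have hg_int : Integrable (fun ω => cosh (c * δ) + B * X ω) μ :=
      (integrable_const _).add (hint.const_mul B)
    have h1 := condExp_mono (m := m) hexp_int hg_int hpt
    have h2 : μ[fun ω => cosh (c * δ) + B * X ω|m] =ᵐ[μ] fun _ => cosh (c * δ) := by
      have heq : (fun ω => cosh (c * δ) + B * X ω) = (fun _ => cosh (c * δ)) + B • X := by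
        funext ω; simp [smul_eq_mul]
      rw [heq]
      calc μ[(fun _ => cosh (c * δ)) + B • X|m]
          =ᵐ[μ] μ[fun _ => cosh (c * δ)|m] + μ[B • X|m] :=
        condExp_add (integrable_const _) (hint.smul B) m
      _ =ᵐ[μ] (fun _ => cosh (c * δ)) + B • μ[X|m] := by
          refine Filter.EventuallyEq.add ?_ (condExp_smul B X m)
          rw [condExp_const hm]
      _ =ᵐ[μ] fun _ => cosh (c * δ) := by
          filter_upwards [hcond] with ω h
          simp only [Pi.add_apply, Pi.smul_apply, smul_eq_mul]
          rw [h]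
          simp
    refine (h1.trans h2.le).trans (Filter.Eventually.of_forall fun ω => ?_)
    calc cosh (c * δ) ≤ exp ((c * δ) ^ 2 / 2) := Real.cosh_le_exp_half_sq _
    _ = exp (c ^ 2 * δ ^ 2 / 2) := by rw [mul_pow]

lemma meas_ofReal_mul_rpow (C : ℝ) :
    Measurable fun u : ℝ => ENNReal.ofReal (C * u ^ (-2 : ℝ)) := by
  measurability

/-- Conditional Azuma–Hoeffding inequality: for `ℝ^d`-valued martingale differences
`Y_1, …, Y_k` with `|Y_i| ≤ δ_i` a.s., `S_k = ∑ Y_i` and `Λ = ∑ δ_i²`, one has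
`E[exp(|S_k|²/(4 d Λ)) | ℱ_0] ≤ 3` almost surely. -/
theorem stmt_2 {Ω : Type*} {m0 : MeasurableSpace Ω} (μ : Measure Ω) [IsProbabilityMeasure μ]
    {d : ℕ} (k : ℕ) (ℱ : ℕ → MeasurableSpace Ω)
    (hmono : Monotone ℱ) (hle : ∀ i, ℱ i ≤ m0)
    (Y : ℕ → Ω → EuclideanSpace ℝ (Fin d)) (δ : ℕ → ℝ)
    (hY0 : Y 0 = 0)
    (hadapted : ∀ i, StronglyMeasurable[ℱ i] (Y i))
    (hint : ∀ i, Integrable (Y i) μ)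
    (hmart : ∀ i, 1 ≤ i → μ[Y i | ℱ (i - 1)] =ᵐ[μ] 0)
    (hbdd : ∀ i, 1 ≤ i → i ≤ k → ∀ᵐ ω ∂μ, ‖Y i ω‖ ≤ δ i) :
    μ[fun ω => Real.exp (‖∑ i ∈ Finset.Icc 1 k, Y i ω‖ ^ 2 /
        (4 * d * ∑ i ∈ Finset.Icc 1 k, δ i ^ 2)) | ℱ 0]
      ≤ᵐ[μ] fun _ => 3 := by
  classical
  set Λ : ℝ := ∑ i ∈ Finset.Icc 1 k, δ i ^ 2 with hΛdef
  by_cases hD : (4 : ℝ) * d * Λ = 0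
  · have hG : (fun ω => Real.exp (‖∑ i ∈ Finset.Icc 1 k, Y i ω‖ ^ 2 / (4 * d * Λ)))
        = fun _ => (1 : ℝ) := by
      funext ω; rw [hD, div_zero, Real.exp_zero]
    rw [hG, condExp_const (hle 0)]
    exact Filter.Eventually.of_forall fun ω => by norm_num
  -- main case
  have hΛnn : 0 ≤ Λ := Finset.sum_nonneg fun i _ => sq_nonneg _
  have hdpos : 0 < d := by
    rcases Nat.eq_zero_or_pos d with h | h
    · exact absurd (by rw [h]; push_cast; ring) hD
    · exact h
  have hΛpos : 0 < Λ := by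
    rcases lt_or_eq_of_le hΛnn with h | h
    · exact h
    · exact absurd (by rw [← h]; ring) hD
  haveI : (ae μ).NeBot := ae_neBot.mpr (IsProbabilityMeasure.ne_zero μ)
  have hδnn : ∀ i, 1 ≤ i → i ≤ k → 0 ≤ δ i := fun i h1 h2 => by
    obtain ⟨ω, hω⟩ := (hbdd i h1 h2).exists
    exact le_trans (norm_nonneg _) hω
  set T : Fin d → ℕ → Ω → ℝ := fun j n ω => ∑ i ∈ Finset.Icc 1 n, Y i ω j with hT
  set B : ℝ := ∑ i ∈ Finset.Icc 1 k, δ i with hBdef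
  have hZm : ∀ (j : Fin d) (i : ℕ), StronglyMeasurable[ℱ i] fun ω => Y i ω j :=
    fun j i => (EuclideanSpace.proj (𝕜 := ℝ) j).continuous.comp_stronglyMeasurable (hadapted i)
  have hTm : ∀ (j : Fin d) (n : ℕ), StronglyMeasurable[ℱ n] (T j n) := by
    intro j n
    have : Measurable[ℱ n] fun ω => ∑ i ∈ Finset.Icc 1 n, Y i ω j := by
      apply Finset.measurable_sum
      intro i hi
      exact (((hZm j i).mono (hmono (Finset.mem_Icc.mp hi).2)).measurable)
    exact this.stronglyMeasurable
  have hae_bdd : ∀ᵐ ω ∂μ, ∀ i, i ∈ Finset.Icc 1 k → ‖Y i ω‖ ≤ δ i := by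
    rw [ae_all_iff]
    intro i
    by_cases hi : i ∈ Finset.Icc 1 k
    · obtain ⟨h1, h2⟩ := Finset.mem_Icc.mp hi
      filter_upwards [hbdd i h1 h2] with ω h _
      exact h
    · exact Filter.Eventually.of_forall fun ω h => absurd h hi
  have hTbdd : ∀ᵐ ω ∂μ, ∀ (j : Fin d) (n : ℕ), n ≤ k → |T j n ω| ≤ B := by
    filter_upwards [hae_bdd] with ω h j n hn
    calc |T j n ω| ≤ ∑ i ∈ Finset.Icc 1 n, |Y i ω j| := Finset.abs_sum_le_sum_abs _ _
    _ ≤ ∑ i ∈ Finset.Icc 1 n, δ i := by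
        refine Finset.sum_le_sum fun i hi => ?_
        exact le_trans (abs_coord_le_norm _ _) (h i (Finset.Icc_subset_Icc_right hn hi))
    _ ≤ B := by
        refine Finset.sum_le_sum_of_subset_of_nonneg (Finset.Icc_subset_Icc_right hn) ?_
        intro i hi _
        obtain ⟨h1, h2⟩ := Finset.mem_Icc.mp hi
        exact hδnn i h1 h2
  have hexpTint : ∀ (j : Fin d) (c : ℝ) (n : ℕ), n ≤ k →
      Integrable (fun ω => exp (c * T j n ω)) μ := by
    intro j c n hn
    refine Integrable.mono' (integrable_const (exp (|c| * B)))
      (Real.continuous_exp.comp_aestronglyMeasurable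
        ((((hTm j n).mono (hle n)).aestronglyMeasurable).const_mul c)) ?_
    filter_upwards [hTbdd] with ω h
    rw [Real.norm_eq_abs, Real.abs_exp]
    apply Real.exp_le_exp.mpr
    calc c * T j n ω ≤ |c * T j n ω| := le_abs_self _
    _ = |c| * |T j n ω| := abs_mul _ _
    _ ≤ |c| * B := mul_le_mul_of_nonneg_left (h j n hn) (abs_nonneg c)
  have hZint : ∀ (j : Fin d) (i : ℕ), Integrable (fun ω => Y i ω j) μ :=
    fun j i => (EuclideanSpace.proj (𝕜 := ℝ) j).integrable_comp (hint i)
  have hexpZint : ∀ (j : Fin d) (c : ℝ) (i : ℕ), 1 ≤ i → i ≤ k →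
      Integrable (fun ω => exp (c * Y i ω j)) μ := by
    intro j c i h1 h2
    refine Integrable.mono' (integrable_const (exp (|c| * δ i)))
      (Real.continuous_exp.comp_aestronglyMeasurable ((hZint j i).1.const_mul c)) ?_
    filter_upwards [hbdd i h1 h2] with ω h
    rw [Real.norm_eq_abs, Real.abs_exp]
    apply Real.exp_le_exp.mpr
    calc c * Y i ω j ≤ |c * Y i ω j| := le_abs_self _
    _ = |c| * |Y i ω j| := abs_mul _ _
    _ ≤ |c| * δ i := mul_le_mul_of_nonneg_left
        (le_trans (abs_coord_le_norm _ _) h) (abs_nonneg c)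
  have hZcond : ∀ (j : Fin d) (n : ℕ), μ[fun ω => Y (n + 1) ω j|ℱ n] =ᵐ[μ] 0 := by
    intro j n
    have hmart' := hmart (n + 1) (Nat.le_add_left 1 n)
    simp only [Nat.add_sub_cancel] at hmart'
    refine (ae_eq_condExp_of_forall_setIntegral_eq (hle n) (hZint j (n + 1))
      (fun s _ _ => (integrable_zero _ _ _).integrableOn)
      (fun s hs _ => ?_) aestronglyMeasurable_const).symm
    have e1 : ∫ ω in s, Y (n + 1) ω j ∂μ
        = EuclideanSpace.proj (𝕜 := ℝ) j (∫ ω in s, Y (n + 1) ω ∂μ) :=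
      by exact ContinuousLinearMap.integral_comp_comm (EuclideanSpace.proj (𝕜 := ℝ) j)
          ((hint (n + 1)).restrict)
    have e2 : ∫ ω in s, Y (n + 1) ω ∂μ = 0 := by
      rw [← setIntegral_condExp (hle n) (hint (n + 1)) hs]
      rw [integral_congr_ae (ae_restrict_of_ae hmart')]
      simp
    rw [e1, e2, map_zero]
    simp
  -- key MGF bound
  have hkey : ∀ (A : Set Ω), MeasurableSet[ℱ 0] A → ∀ (j : Fin d) (c : ℝ) (n : ℕ), n ≤ k →
      ∫ ω in A, exp (c * T j n ω) ∂μ ≤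
        exp (c ^ 2 * (∑ i ∈ Finset.Icc 1 n, δ i ^ 2) / 2) * (μ A).toReal := by
    intro A hA j c n
    induction n with
    | zero =>
      intro _
      have h0 : Finset.Icc 1 0 = (∅ : Finset ℕ) := by decide
      have hT0 : ∀ ω, T j 0 ω = 0 := fun ω => by rw [hT]; simp [h0]
      simp only [hT0, h0, Finset.sum_empty, mul_zero, zero_div, Real.exp_zero, one_mul]
      rw [setIntegral_const]
      simp
      exact le_rfl
    | succ n ih =>
      intro hn1
      have hn : n ≤ k := Nat.le_of_succ_le hn1
      have ihn := ih hn
      have hA' : MeasurableSet[ℱ n] A := hmono (Nat.zero_le n) A hA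
      set K : ℝ := exp (c ^ 2 * δ (n + 1) ^ 2 / 2) with hK
      have hsplit : ∀ ω, T j (n + 1) ω = T j n ω + Y (n + 1) ω j := by
        intro ω; rw [hT]
        exact Finset.sum_Icc_succ_top (Nat.succ_le_succ (Nat.zero_le n)) _
      have hprod : (fun ω => exp (c * T j (n + 1) ω))
          = fun ω => exp (c * T j n ω) * exp (c * Y (n + 1) ω j) := by
        funext ω; rw [hsplit, mul_add, Real.exp_add]
      have hint1 : Integrable (fun ω => exp (c * T j (n + 1) ω)) μ := hexpTint j c (n + 1) hn1
      have hintn : Integrable (fun ω => exp (c * T j n ω)) μ := hexpTint j c n hn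
      have hintZ : Integrable (fun ω => exp (c * Y (n + 1) ω j)) μ :=
        hexpZint j c (n + 1) (Nat.le_add_left 1 n) hn1
      have hfg : Integrable ((fun ω => exp (c * T j n ω)) * fun ω => exp (c * Y (n + 1) ω j)) μ :=
        (hprod ▸ hint1).congr (Filter.Eventually.of_forall fun _ => rfl)
      have hfmeas : StronglyMeasurable[ℱ n] fun ω => exp (c * T j n ω) :=
        Real.continuous_exp.comp_stronglyMeasurable ((hTm j n).const_mul c)
      have hmul := condExp_mul_of_stronglyMeasurable_left (m := ℱ n) (μ := μ) hfmeas hfg hintZ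
      have hZabs : ∀ᵐ ω ∂μ, |Y (n + 1) ω j| ≤ δ (n + 1) := by
        filter_upwards [hbdd (n + 1) (Nat.le_add_left 1 n) hn1] with ω h
        exact le_trans (abs_coord_le_norm _ _) h
      have hhoef := cond_hoeffding (c := c) (hle n) (hδnn (n + 1) (Nat.le_add_left 1 n) hn1)
        (hZint j (n + 1)) (hZcond j n) hZabs
      have hcomb : μ[(fun ω => exp (c * T j n ω)) * fun ω => exp (c * Y (n + 1) ω j)|ℱ n]
          ≤ᵐ[μ] fun ω => exp (c * T j n ω) * K := by
        refine hmul.le.trans ?_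
        filter_upwards [hhoef] with ω h
        exact mul_le_mul_of_nonneg_left h (le_of_lt (Real.exp_pos _))
      have e1 : ∫ ω in A, exp (c * T j (n + 1) ω) ∂μ
          = ∫ ω in A, (μ[(fun ω => exp (c * T j n ω)) * fun ω => exp (c * Y (n + 1) ω j)|ℱ n]) ω ∂μ := by
        rw [setIntegral_condExp (hle n) hfg hA']
        rw [hprod]
        rfl
      have e2 : ∫ ω in A, (μ[(fun ω => exp (c * T j n ω)) * fun ω => exp (c * Y (n + 1) ω j)|ℱ n]) ω ∂μ
          ≤ ∫ ω in A, exp (c * T j n ω) * K ∂μ :=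
        integral_mono_ae (integrable_condExp.restrict)
          ((hintn.mul_const K).restrict) (ae_restrict_of_ae hcomb)
      have e3 : ∫ ω in A, exp (c * T j n ω) * K ∂μ = (∫ ω in A, exp (c * T j n ω) ∂μ) * K :=
        integral_mul_const K _
      have e4 : (∫ ω in A, exp (c * T j n ω) ∂μ) * K
          ≤ (exp (c ^ 2 * (∑ i ∈ Finset.Icc 1 n, δ i ^ 2) / 2) * (μ A).toReal) * K :=
        mul_le_mul_of_nonneg_right ihn (le_of_lt (Real.exp_pos _))
      have e5 : (exp (c ^ 2 * (∑ i ∈ Finset.Icc 1 n, δ i ^ 2) / 2) * (μ A).toReal) * K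
          = exp (c ^ 2 * (∑ i ∈ Finset.Icc 1 (n + 1), δ i ^ 2) / 2) * (μ A).toReal := by
        rw [Finset.sum_Icc_succ_top (Nat.succ_le_succ (Nat.zero_le n)), hK,
          show c ^ 2 * ((∑ i ∈ Finset.Icc 1 n, δ i ^ 2) + δ (n + 1) ^ 2) / 2
            = c ^ 2 * (∑ i ∈ Finset.Icc 1 n, δ i ^ 2) / 2 + c ^ 2 * δ (n + 1) ^ 2 / 2 by ring,
          Real.exp_add]
        ring
      calc ∫ ω in A, exp (c * T j (n + 1) ω) ∂μ
          ≤ (∫ ω in A, exp (c * T j n ω) ∂μ) * K := by rw [e1, ← e3]; exact e2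
      _ ≤ _ := by rw [← e5]; exact e4
  -- Chernoff bound
  have chern : ∀ (A : Set Ω), MeasurableSet[ℱ 0] A → ∀ (U : Ω → ℝ),
      StronglyMeasurable U →
      (∀ᵐ ω ∂μ, |U ω| ≤ B) →
      (∀ c : ℝ, ∫ ω in A, exp (c * U ω) ∂μ ≤ exp (c ^ 2 * Λ / 2) * (μ A).toReal) →
      ∀ t : ℝ, 0 ≤ t → μ.restrict A {ω | t ≤ U ω}
        ≤ ENNReal.ofReal (exp (-(t ^ 2) / (2 * Λ)) * (μ A).toReal) := by
    intro A hA U hUm hUb hmgf t ht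
    set c : ℝ := t / Λ with hc
    have hc0 : 0 ≤ c := div_nonneg ht hΛpos.le
    have hsmeas : MeasurableSet {ω | t ≤ U ω} :=
      measurableSet_le measurable_const hUm.measurable
    have hUint : Integrable (fun ω => exp (c * U ω)) μ := by
      refine Integrable.mono' (integrable_const (exp (|c| * B)))
        (Real.continuous_exp.comp_aestronglyMeasurable
          ((hUm.aestronglyMeasurable).const_mul c)) ?_
      filter_upwards [hUb] with ω h
      rw [Real.norm_eq_abs, Real.abs_exp]
      apply Real.exp_le_exp.mpr
      calc c * U ω ≤ |c * U ω| := le_abs_self _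
      _ = |c| * |U ω| := abs_mul _ _
      _ ≤ |c| * B := mul_le_mul_of_nonneg_left h (abs_nonneg c)
    have hptw : ∀ ω, Set.indicator {ω | t ≤ U ω} (fun _ => (1:ℝ)) ω
        ≤ exp (c * U ω) * exp (-(c * t)) := by
      intro ω
      by_cases hω : ω ∈ {ω | t ≤ U ω}
      · rw [Set.indicator_of_mem hω]
        rw [← Real.exp_add]
        refine Real.one_le_exp ?_
        have : t ≤ U ω := hω
        nlinarith
      · rw [Set.indicator_of_notMem hω]
        positivity
    have h1 : (μ.restrict A {ω | t ≤ U ω}).toReal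
        = ∫ ω in A, Set.indicator {ω | t ≤ U ω} (fun _ => (1:ℝ)) ω ∂μ := by
      rw [show (fun _ : Ω => (1:ℝ)) = (1 : Ω → ℝ) from rfl, integral_indicator_one hsmeas]
      rfl
    have h2 : ∫ ω in A, Set.indicator {ω | t ≤ U ω} (fun _ => (1:ℝ)) ω ∂μ
        ≤ ∫ ω in A, exp (c * U ω) * exp (-(c * t)) ∂μ :=
      integral_mono (((integrable_const (1:ℝ)).indicator hsmeas).restrict)
        ((hUint.mul_const _).restrict) hptw
    have h3 : ∫ ω in A, exp (c * U ω) * exp (-(c * t)) ∂μ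
        = (∫ ω in A, exp (c * U ω) ∂μ) * exp (-(c * t)) := integral_mul_const _ _
    have h4 : (∫ ω in A, exp (c * U ω) ∂μ) * exp (-(c * t))
        ≤ (exp (c ^ 2 * Λ / 2) * (μ A).toReal) * exp (-(c * t)) :=
      mul_le_mul_of_nonneg_right (hmgf c) (Real.exp_pos _).le
    have h5 : (exp (c ^ 2 * Λ / 2) * (μ A).toReal) * exp (-(c * t))
        = exp (-(t ^ 2) / (2 * Λ)) * (μ A).toReal := by
      rw [mul_comm (exp (c ^ 2 * Λ / 2)) ((μ A).toReal), mul_assoc, ← Real.exp_add]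
      rw [show c ^ 2 * Λ / 2 + -(c * t) = -(t ^ 2) / (2 * Λ) by
        rw [hc]; field_simp; ring]
      ring
    have hto : (μ.restrict A {ω | t ≤ U ω}).toReal
        ≤ exp (-(t ^ 2) / (2 * Λ)) * (μ A).toReal := by
      rw [h1]; rw [← h5]; exact le_trans h2 (by rw [h3]; exact h4)
    have hfin : μ.restrict A {ω | t ≤ U ω} ≠ ⊤ := by
      exact ((measure_mono (Set.subset_univ _)).trans_lt (measure_lt_top _ _)).ne
    rw [← ENNReal.ofReal_toReal hfin]
    exact ENNReal.ofReal_le_ofReal hto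
  -- per-coordinate layer cake
  have hcoord : ∀ (A : Set Ω), MeasurableSet[ℱ 0] A → ∀ j : Fin d,
      ∫⁻ ω in A, ENNReal.ofReal (exp ((T j k ω) ^ 2 / (4 * Λ))) ∂μ ≤ 3 * μ A := by
    intro A hA j
    have hTm0 : StronglyMeasurable (T j k) := (hTm j k).mono (hle k)
    have hTb : ∀ᵐ ω ∂μ, |T j k ω| ≤ B := by
      filter_upwards [hTbdd] with ω h; exact h j k le_rfl
    have hTmgf : ∀ c : ℝ, ∫ ω in A, exp (c * T j k ω) ∂μ
        ≤ exp (c ^ 2 * Λ / 2) * (μ A).toReal := fun c => hkey A hA j c k le_rfl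
    have hnegTmgf : ∀ c : ℝ, ∫ ω in A, exp (c * (-(T j k ω))) ∂μ
        ≤ exp (c ^ 2 * Λ / 2) * (μ A).toReal := by
      intro c
      have := hkey A hA j (-c) k le_rfl
      have he : (fun ω => exp (-c * T j k ω)) = fun ω => exp (c * (-(T j k ω))) := by
        funext ω; ring_nf
      rw [show (-c) ^ 2 = c ^ 2 by ring] at this
      calc ∫ ω in A, exp (c * (-(T j k ω))) ∂μ = ∫ ω in A, exp (-c * T j k ω) ∂μ := by
            rw [he]
      _ ≤ _ := this
    have htail : ∀ t : ℝ, 0 ≤ t → μ.restrict A {ω | t ≤ |T j k ω|}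
        ≤ ENNReal.ofReal (2 * (exp (-(t ^ 2) / (2 * Λ)) * (μ A).toReal)) := by
      intro t ht
      have hsub : {ω | t ≤ |T j k ω|} ⊆ {ω | t ≤ T j k ω} ∪ {ω | t ≤ -(T j k ω)} := by
        intro ω hω
        rcases abs_cases (T j k ω) with ⟨he, _⟩ | ⟨he, _⟩
        · left; exact le_of_le_of_eq hω he
        · right; exact le_of_le_of_eq hω he
      calc μ.restrict A {ω | t ≤ |T j k ω|}
          ≤ μ.restrict A ({ω | t ≤ T j k ω} ∪ {ω | t ≤ -(T j k ω)}) := measure_mono hsub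
      _ ≤ μ.restrict A {ω | t ≤ T j k ω} + μ.restrict A {ω | t ≤ -(T j k ω)} :=
          measure_union_le _ _
      _ ≤ ENNReal.ofReal (exp (-(t ^ 2) / (2 * Λ)) * (μ A).toReal)
            + ENNReal.ofReal (exp (-(t ^ 2) / (2 * Λ)) * (μ A).toReal) := by
          gcongr
          · exact chern A hA _ hTm0 hTb hTmgf t ht
          · refine chern A hA _ hTm0.neg ?_ hnegTmgf t ht
            filter_upwards [hTb] with ω h
            simpa only [Pi.neg_apply, abs_neg] using h
      _ = ENNReal.ofReal (2 * (exp (-(t ^ 2) / (2 * Λ)) * (μ A).toReal)) := by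
          rw [← ENNReal.ofReal_add (by positivity) (by positivity)]
          congr 1; ring
    have hexpm : Measurable fun ω => exp ((T j k ω) ^ 2 / (4 * Λ)) :=
      (((hTm0.measurable.pow_const 2).div_const _)).exp
    have hlc := lintegral_eq_lintegral_meas_le (μ.restrict A)
      (Filter.Eventually.of_forall fun ω => (Real.exp_pos _).le)
      hexpm.aemeasurable
    rw [hlc, ← Set.Ioc_union_Ioi_eq_Ioi (zero_le_one' ℝ),
      lintegral_union measurableSet_Ioi (Set.Ioc_disjoint_Ioi le_rfl)]
    have hAm0 : MeasurableSet A := hle 0 A hA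
    have hresA : ∀ s : Set Ω, μ.restrict A s ≤ μ A := fun s => by
      rw [Measure.restrict_apply' hAm0]
      exact measure_mono Set.inter_subset_right
    have part1 : ∫⁻ t in Set.Ioc (0:ℝ) 1,
        μ.restrict A {a | t ≤ exp ((T j k a) ^ 2 / (4 * Λ))} ≤ μ A := by
      calc ∫⁻ t in Set.Ioc (0:ℝ) 1, μ.restrict A {a | t ≤ exp ((T j k a) ^ 2 / (4 * Λ))}
          ≤ ∫⁻ _ in Set.Ioc (0:ℝ) 1, μ A := lintegral_mono fun t => hresA _
      _ = μ A * volume (Set.Ioc (0:ℝ) 1) := setLIntegral_const _ _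
      _ = μ A := by rw [Real.volume_Ioc]; norm_num
    have part2 : ∫⁻ t in Set.Ioi (1:ℝ),
        μ.restrict A {a | t ≤ exp ((T j k a) ^ 2 / (4 * Λ))}
          ≤ ENNReal.ofReal (2 * (μ A).toReal) := by
      have hb : ∀ u ∈ Set.Ioi (1:ℝ), μ.restrict A {a | u ≤ exp ((T j k a) ^ 2 / (4 * Λ))}
          ≤ ENNReal.ofReal ((2 * (μ A).toReal) * u ^ (-2 : ℝ)) := by
        intro u hu
        have hu1 : (1:ℝ) < u := hu
        have hu0 : (0:ℝ) < u := lt_trans one_pos hu1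
        have hlog : 0 ≤ Real.log u := Real.log_nonneg hu1.le
        set t : ℝ := Real.sqrt (4 * Λ * Real.log u) with htdef
        have ht0 : 0 ≤ t := Real.sqrt_nonneg _
        have hsub : {a | u ≤ exp ((T j k a) ^ 2 / (4 * Λ))} ⊆ {a | t ≤ |T j k a|} := by
          intro a ha
          have h1 : Real.log u ≤ (T j k a) ^ 2 / (4 * Λ) :=
            (Real.log_le_iff_le_exp hu0).mpr ha
          have h2 : 4 * Λ * Real.log u ≤ (T j k a) ^ 2 := by
            rw [le_div_iff₀ (by positivity)] at h1
            nlinarith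
          calc t ≤ Real.sqrt ((T j k a) ^ 2) := Real.sqrt_le_sqrt h2
          _ = |T j k a| := Real.sqrt_sq_eq_abs _
        have hts : t ^ 2 = 4 * Λ * Real.log u := Real.sq_sqrt (by positivity)
        calc μ.restrict A {a | u ≤ exp ((T j k a) ^ 2 / (4 * Λ))}
            ≤ μ.restrict A {a | t ≤ |T j k a|} := measure_mono hsub
        _ ≤ ENNReal.ofReal (2 * (exp (-(t ^ 2) / (2 * Λ)) * (μ A).toReal)) := htail t ht0
        _ = ENNReal.ofReal ((2 * (μ A).toReal) * u ^ (-2 : ℝ)) := by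
            congr 1
            rw [hts, Real.rpow_def_of_pos hu0,
              show -(4 * Λ * Real.log u) / (2 * Λ) = Real.log u * (-2) by
                field_simp; ring]
            ring
      calc ∫⁻ t in Set.Ioi (1:ℝ), μ.restrict A {a | t ≤ exp ((T j k a) ^ 2 / (4 * Λ))}
          ≤ ∫⁻ u in Set.Ioi (1:ℝ), ENNReal.ofReal ((2 * (μ A).toReal) * u ^ (-2 : ℝ)) :=
            setLIntegral_mono (meas_ofReal_mul_rpow _) hb
      _ = ENNReal.ofReal (∫ u in Set.Ioi (1:ℝ), (2 * (μ A).toReal) * u ^ (-2 : ℝ)) := by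
            refine (ofReal_integral_eq_lintegral_ofReal ?_ ?_).symm
            · exact (integrableOn_Ioi_rpow_of_lt (by norm_num) zero_lt_one).const_mul _
            · filter_upwards [self_mem_ae_restrict measurableSet_Ioi] with u hu
              have : (0:ℝ) < u := lt_trans one_pos hu
              positivity
      _ = ENNReal.ofReal (2 * (μ A).toReal) := by
            rw [MeasureTheory.integral_const_mul,
              integral_Ioi_rpow_of_lt (by norm_num) zero_lt_one]
            norm_num
    calc (∫⁻ t in Set.Ioc (0:ℝ) 1, μ.restrict A {a | t ≤ exp ((T j k a) ^ 2 / (4 * Λ))})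
          + ∫⁻ t in Set.Ioi (1:ℝ), μ.restrict A {a | t ≤ exp ((T j k a) ^ 2 / (4 * Λ))}
        ≤ μ A + ENNReal.ofReal (2 * (μ A).toReal) := add_le_add part1 part2
    _ = μ A + 2 * μ A := by
        rw [ENNReal.ofReal_mul (by norm_num), ENNReal.ofReal_ofNat,
          ENNReal.ofReal_toReal (measure_ne_top μ A)]
    _ = 3 * μ A := by ring
  -- combine coordinates
  set G : Ω → ℝ := fun ω =>
    Real.exp (‖∑ i ∈ Finset.Icc 1 k, Y i ω‖ ^ 2 / (4 * (d:ℝ) * Λ)) with hGdef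
  have hdne : ((d:ℝ)) ≠ 0 := Nat.cast_ne_zero.mpr hdpos.ne'
  have hSj : ∀ (ω : Ω) (j : Fin d), (∑ i ∈ Finset.Icc 1 k, Y i ω) j = T j k ω := by
    intro ω j
    rw [hT]
    exact map_sum (EuclideanSpace.proj (𝕜 := ℝ) j) (fun i => Y i ω) (Finset.Icc 1 k)
  have hconv : ∀ ω, G ω ≤ ∑ j : Fin d, (d:ℝ)⁻¹ * exp ((T j k ω) ^ 2 / (4 * Λ)) := by
    intro ω
    have hnorm : ‖∑ i ∈ Finset.Icc 1 k, Y i ω‖ ^ 2 = ∑ j : Fin d, (T j k ω) ^ 2 := by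
      rw [EuclideanSpace.norm_eq, Real.sq_sqrt (Finset.sum_nonneg fun _ _ => sq_nonneg _)]
      refine Finset.sum_congr rfl fun j _ => ?_
      rw [Real.norm_eq_abs, sq_abs, hSj ω j]
    have hw1 : ∑ _j : Fin d, (d:ℝ)⁻¹ = 1 := by
      rw [Finset.sum_const, Finset.card_univ, Fintype.card_fin, nsmul_eq_mul,
        mul_inv_cancel₀ hdne]
    have hjensen := convexOn_exp.map_sum_le (t := Finset.univ)
      (w := fun _ : Fin d => (d:ℝ)⁻¹) (p := fun j => (T j k ω) ^ 2 / (4 * Λ))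
      (fun _ _ => by positivity) hw1 (fun _ _ => Set.mem_univ _)
    have harg : ∑ j : Fin d, (d:ℝ)⁻¹ • ((T j k ω) ^ 2 / (4 * Λ))
        = ‖∑ i ∈ Finset.Icc 1 k, Y i ω‖ ^ 2 / (4 * (d:ℝ) * Λ) := by
      rw [hnorm]
      simp only [smul_eq_mul]
      rw [← Finset.mul_sum, ← Finset.sum_div, inv_mul_eq_div, div_div]
      congr 1
      ring
    simp only [hGdef]
    rw [← harg]
    refine hjensen.trans (le_of_eq ?_)
    simp [smul_eq_mul]
  -- main lintegral bound
  have hexpm : ∀ j : Fin d, Measurable fun ω => exp ((T j k ω) ^ 2 / (4 * Λ)) :=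
    fun j => ((((hTm j k).mono (hle k)).measurable.pow_const 2).div_const _).exp
  have hmain : ∀ (A : Set Ω), MeasurableSet[ℱ 0] A →
      ∫⁻ ω in A, ENNReal.ofReal (G ω) ∂μ ≤ 3 * μ A := by
    intro A hA
    have step1 : ∫⁻ ω in A, ENNReal.ofReal (G ω) ∂μ
        ≤ ∫⁻ ω in A, ∑ j : Fin d,
            ENNReal.ofReal ((d:ℝ)⁻¹) * ENNReal.ofReal (exp ((T j k ω) ^ 2 / (4 * Λ))) ∂μ := by
      refine lintegral_mono fun ω => ?_
      refine le_trans (ENNReal.ofReal_le_ofReal (hconv ω)) (le_of_eq ?_)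
      rw [ENNReal.ofReal_sum_of_nonneg (fun j _ => by positivity)]
      exact Finset.sum_congr rfl fun j _ => ENNReal.ofReal_mul (by positivity)
    have step2 : ∫⁻ ω in A, ∑ j : Fin d,
          ENNReal.ofReal ((d:ℝ)⁻¹) * ENNReal.ofReal (exp ((T j k ω) ^ 2 / (4 * Λ))) ∂μ
        = ∑ j : Fin d, ENNReal.ofReal ((d:ℝ)⁻¹)
            * ∫⁻ ω in A, ENNReal.ofReal (exp ((T j k ω) ^ 2 / (4 * Λ))) ∂μ := by
      rw [lintegral_finset_sum]
      · exact Finset.sum_congr rfl fun j _ =>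
          lintegral_const_mul _ (hexpm j).ennreal_ofReal
      · exact fun j _ => measurable_const.mul (hexpm j).ennreal_ofReal
    have step3 : ∑ j : Fin d, ENNReal.ofReal ((d:ℝ)⁻¹)
          * ∫⁻ ω in A, ENNReal.ofReal (exp ((T j k ω) ^ 2 / (4 * Λ))) ∂μ
        ≤ ∑ _j : Fin d, ENNReal.ofReal ((d:ℝ)⁻¹) * (3 * μ A) := by
      refine Finset.sum_le_sum fun j _ => ?_
      gcongr
      exact hcoord A hA j
    have step4 : ∑ _j : Fin d, ENNReal.ofReal ((d:ℝ)⁻¹) * (3 * μ A) = 3 * μ A := by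
      rw [Finset.sum_const, Finset.card_univ, Fintype.card_fin, nsmul_eq_mul,
        ← mul_assoc]
      rw [show ((d : ℕ) : ℝ≥0∞) = ENNReal.ofReal ((d : ℕ) : ℝ) from
        (ENNReal.ofReal_natCast d).symm]
      rw [← ENNReal.ofReal_mul (by positivity), mul_inv_cancel₀ hdne]
      simp
    exact le_trans step1 (le_trans (le_of_eq step2) (le_trans step3 (le_of_eq step4)))
  -- integrability of G
  have hSm : Measurable fun ω => ∑ i ∈ Finset.Icc 1 k, Y i ω :=
    Finset.measurable_sum _ fun i _ => ((hadapted i).mono (hle i)).measurable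
  have hGsm : StronglyMeasurable G := by
    rw [hGdef]
    exact (((hSm.norm.pow_const 2).div_const _).exp).stronglyMeasurable
  have hGnn : ∀ ω, 0 ≤ G ω := fun ω => (Real.exp_pos _).le
  have hGint : Integrable G μ := by
    refine ⟨hGsm.aestronglyMeasurable, ?_⟩
    rw [hasFiniteIntegral_iff_norm]
    have : ∫⁻ ω, ENNReal.ofReal ‖G ω‖ ∂μ = ∫⁻ ω, ENNReal.ofReal (G ω) ∂μ :=
      lintegral_congr fun ω => by rw [Real.norm_eq_abs, abs_of_nonneg (hGnn ω)]
    rw [this]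
    have := hmain Set.univ MeasurableSet.univ
    rw [Measure.restrict_univ] at this
    exact lt_of_le_of_lt this (by
      rw [measure_univ, mul_one]
      exact ENNReal.ofNat_lt_top)
  -- set-integral bound
  have hsetint : ∀ (A : Set Ω), MeasurableSet[ℱ 0] A →
      ∫ ω in A, G ω ∂μ ≤ 3 * (μ A).toReal := by
    intro A hA
    rw [integral_eq_lintegral_of_nonneg_ae
      (Filter.Eventually.of_forall fun ω => hGnn ω)
      (hGsm.aestronglyMeasurable.restrict)]
    have h1 := hmain A hA
    have h2 : (3 * μ A : ℝ≥0∞).toReal = 3 * (μ A).toReal := by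
      rw [ENNReal.toReal_mul]
      norm_num
    rw [← h2]
    exact ENNReal.toReal_mono
      (ENNReal.mul_ne_top (by norm_num) (measure_ne_top μ A)) h1
  -- conclusion via trim
  haveI : IsFiniteMeasure (μ.trim (hle 0)) := isFiniteMeasure_trim (hle 0)
  have hsm : StronglyMeasurable[ℱ 0] fun ω => (3:ℝ) - (μ[G|ℱ 0]) ω :=
    stronglyMeasurable_const.sub stronglyMeasurable_condExp
  have h0 : 0 ≤ᵐ[μ.trim (hle 0)] fun ω => (3:ℝ) - (μ[G|ℱ 0]) ω := by
    refine ae_nonneg_of_forall_setIntegral_nonneg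
      (Integrable.trim (hle 0) ((integrable_const 3).sub integrable_condExp) hsm) ?_
    intro s hs _
    rw [← setIntegral_trim (hle 0) hsm hs]
    have he : ∫ ω in s, ((3:ℝ) - (μ[G|ℱ 0]) ω) ∂μ
        = 3 * (μ s).toReal - ∫ ω in s, G ω ∂μ := by
      rw [integral_sub (integrableOn_const (C := (3:ℝ)) (measure_ne_top _ _))
        (integrable_condExp.restrict)]
      rw [setIntegral_const, setIntegral_condExp (hle 0) hGint hs]
      rw [smul_eq_mul, mul_comm]
      rfl
    rw [he]
    have := hsetint s hs
    linarith
  have hfinal : μ[G|ℱ 0] ≤ᵐ[μ] fun _ => (3:ℝ) := by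
    refine ae_le_of_ae_le_trim (hm := hle 0) (E := ℝ) ?_
    filter_upwards [h0] with ω h
    simp only [Pi.zero_apply] at h
    linarith
  exact hfinal
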